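/- arXiv:1402.1136 — 3 statements merged into one kernel-verified Lean document; each statement's English description precedes it below -/
import Mathlib

section
/- Suppose the forms satisfy [H1]–[H3] with δ = 0 (coercivity), and suppose there is a function ω: ℝ → ℝ₊ such that |a(t;u,v) − a(s;u,v)| ≤ ω(|t−s|)‖u‖_V‖v‖_V for all u, v ∈ V and s, t ∈ [0,τ]. Then for every fixed θ > arctan(M/α) there is a constant c_θ, independent of s, t, such that for all z ∉ S_θ the resolvent difference satisfies ‖(z − A(t))^{−1} − (z − A(s))^{−1}‖_{B(H)} ≤ (c_θ/|z|)·ω(|t−s|). -/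
/- Resolvent-difference estimate (Haak–Ouhabaz, Corollary 2.2): under [H1]–[H3] with
`δ = 0`, if `|a(t;u,v) - a(s;u,v)| ≤ ω(|t-s|)‖u‖_V‖v‖_V`, then for each fixed
`θ > arctan(M/α)` there is `c_θ` with
`‖R(z,A(t)) - R(z,A(s))‖_{B(H)} ≤ (c_θ/|z|) ω(|t-s|)` for all `z ∉ S_θ`, `z ≠ 0`,
uniformly in `s,t ∈ [0,τ]`.

The resolvent is encoded through its graph: `ActsOn J (a t) wt gt` and `z • J wt - gt = x`
express `J wt = R(z, A(t)) x`; similarly at time `s`.  The conclusion bounds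
`‖R(z,A(t))x - R(z,A(s))x‖_H` for every `x ∈ H`. -/


open Real

lemma cos_bound_aux {θ ψ aw am : ℝ} (hψ0 : 0 ≤ ψ) (hψθ : ψ < θ) (hθπ : θ ≤ π)
    (haw1 : θ ≤ |aw|) (haw2 : |aw| ≤ π) (ham : |am| ≤ ψ) :
    Real.cos (aw + am) ≤ Real.cos (θ - ψ) := by
  have hd1 : θ - ψ ≤ |aw + am| := by
    have h := abs_add_le (aw + am) (-am)
    simp only [add_neg_cancel_right, abs_neg] at h
    linarith
  have hd2 : |aw + am| ≤ π + ψ := by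
    have h := abs_add_le aw am
    linarith
  rw [← Real.cos_abs (aw + am)]
  rcases le_or_gt (|aw + am|) π with h | h
  · exact Real.cos_le_cos_of_nonneg_of_le_pi (by linarith) h hd1
  · rw [show |aw + am| = 2 * π - (2 * π - |aw + am|) by ring, Real.cos_two_pi_sub]
    exact Real.cos_le_cos_of_nonneg_of_le_pi (by linarith) (by linarith) (by linarith)

lemma sector_aux {M α θ : ℝ} (hM : 0 < M) (hα : 0 < α)
    (hθ₁ : Real.arctan (M / α) < θ) (hθ₂ : θ ≤ Real.pi)
    {z : ℂ} (hz : z ≠ 0) (hzarg : θ ≤ |z.arg|)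
    {μ : ℂ} (hμ : |μ.im| ≤ M / α * μ.re)
    {r : ℝ} (hr : 0 ≤ r) :
    Real.sin (θ - Real.arctan (M / α)) * (‖z‖ * r) ≤ ‖(starRingEnd ℂ) z * (r : ℂ) - μ‖ := by
  set ψ := Real.arctan (M / α) with hψdef
  have hMα : 0 < M / α := div_pos hM hα
  have hψ0 : 0 < ψ := by
    have := Real.arctan_strictMono hMα
    rwa [Real.arctan_zero] at this
  have hψπ2 : ψ < π / 2 := Real.arctan_lt_pi_div_two _
  have hσ : 0 < Real.sin (θ - ψ) := Real.sin_pos_of_pos_of_lt_pi (by linarith) (by linarith)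
  have hzabs : 0 < ‖z‖ := norm_pos_iff.mpr hz
  have habsne : ‖z‖ ≠ 0 := by exact hzabs.ne'
  by_cases hμ0 : μ = 0
  · subst hμ0
    have h1 : ‖(starRingEnd ℂ) z * (r : ℂ) - 0‖ = ‖z‖ * r := by
      rw [sub_zero, norm_mul, RCLike.norm_conj, Complex.norm_real, Real.norm_eq_abs,
        abs_of_nonneg hr]
    rw [h1]
    have h2 := mul_le_mul_of_nonneg_right (Real.sin_le_one (θ - ψ))
      (mul_nonneg (norm_nonneg z) hr)
    linarith
  · have hre0 : 0 < μ.re := by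
      rcases lt_or_ge 0 μ.re with h | h
      · exact h
      · exfalso
        have h1 : |μ.im| ≤ 0 := le_trans hμ (by nlinarith)
        have h2 : μ.im = 0 := by simpa using le_antisymm h1 (abs_nonneg _)
        have h3 : μ.re = 0 := le_antisymm h (by nlinarith [abs_nonneg μ.im])
        exact hμ0 (Complex.ext h3 h2)
    have hμabs : 0 < ‖μ‖ := norm_pos_iff.mpr hμ0
    have habsmne : ‖μ‖ ≠ 0 := by exact hμabs.ne'
    have harg : |μ.arg| ≤ ψ := by
      have h2 : |μ.arg| < π / 2 := Complex.abs_arg_lt_pi_div_two_iff.mpr (Or.inl hre0)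
      have h2' := abs_lt.mp h2
      have h4 : μ.arg = Real.arctan (μ.im / μ.re) := by
        rw [← Complex.tan_arg μ, Real.arctan_tan h2'.1 h2'.2]
      have h5 := abs_le.mp (by
        rw [abs_div, abs_of_pos hre0, div_le_iff₀ hre0]; linarith :
        |μ.im / μ.re| ≤ M / α)
      rw [h4]
      refine abs_le.mpr ⟨?_, Real.arctan_strictMono.monotone h5.2⟩
      have := Real.arctan_strictMono.monotone h5.1
      rwa [Real.arctan_neg] at this
    have hK : z.re * μ.re - z.im * μ.im ≤ Real.cos (θ - ψ) * (‖z‖ * ‖μ‖) := by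
      have hcz : z.re = ‖z‖ * Real.cos z.arg := by
        rw [Complex.cos_arg hz, mul_comm, div_mul_cancel₀ _ habsne]
      have hsz : z.im = ‖z‖ * Real.sin z.arg := by
        rw [Complex.sin_arg z, mul_comm, div_mul_cancel₀ _ habsne]
      have hcm : μ.re = ‖μ‖ * Real.cos μ.arg := by
        rw [Complex.cos_arg hμ0, mul_comm, div_mul_cancel₀ _ habsmne]
      have hsm : μ.im = ‖μ‖ * Real.sin μ.arg := by
        rw [Complex.sin_arg μ, mul_comm, div_mul_cancel₀ _ habsmne]
      have hcb := cos_bound_aux (le_of_lt hψ0) hθ₁ hθ₂ hzarg (Complex.abs_arg_le_pi z) harg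
      have h7 : z.re * μ.re - z.im * μ.im = ‖z‖ * ‖μ‖ * Real.cos (z.arg + μ.arg) := by
        rw [hcz, hsz, hcm, hsm, Real.cos_add]; ring
      rw [h7]
      nlinarith [mul_le_mul_of_nonneg_left hcb (by positivity : (0:ℝ) ≤ ‖z‖ * ‖μ‖)]
    set ζ := (starRingEnd ℂ) z * (r : ℂ) - μ with hζ
    have hζre : ζ.re = z.re * r - μ.re := by simp [hζ, Complex.mul_re]
    have hζim : ζ.im = -z.im * r - μ.im := by simp [hζ, Complex.mul_im]
    have hζ2 : ‖ζ‖ ^ 2 = (z.re * r - μ.re) ^ 2 + (-z.im * r - μ.im) ^ 2 := by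
      rw [Complex.sq_norm, Complex.normSq_apply, hζre, hζim]; ring
    have hz2 : ‖z‖ ^ 2 = z.re ^ 2 + z.im ^ 2 := by
      rw [Complex.sq_norm, Complex.normSq_apply]; ring
    have hm2 : ‖μ‖ ^ 2 = μ.re ^ 2 + μ.im ^ 2 := by
      rw [Complex.sq_norm, Complex.normSq_apply]; ring
    have e1 : ‖ζ‖ ^ 2 = ‖z‖ ^ 2 * r ^ 2 - 2 * r * (z.re * μ.re - z.im * μ.im) + ‖μ‖ ^ 2 := by
      rw [hζ2, hz2, hm2]; ring
    have hsc : Real.sin (θ - ψ) ^ 2 = 1 - Real.cos (θ - ψ) ^ 2 := Real.sin_sq (θ - ψ)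
    have e2 : (Real.sin (θ - ψ) * (‖z‖ * r)) ^ 2
        = (‖z‖ * r) ^ 2 - (Real.cos (θ - ψ) * (‖z‖ * r)) ^ 2 := by
      rw [mul_pow, mul_pow, hsc]; ring
    have hsq : (Real.sin (θ - ψ) * (‖z‖ * r)) ^ 2 ≤ ‖ζ‖ ^ 2 := by
      nlinarith [e1, e2, sq_nonneg (Real.cos (θ - ψ) * (‖z‖ * r) - ‖μ‖),
        mul_le_mul_of_nonneg_left hK (by linarith : (0:ℝ) ≤ 2 * r)]
    have h8 := Real.sqrt_le_sqrt hsq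
    rwa [Real.sqrt_sq (by positivity), Real.sqrt_sq (norm_nonneg ζ)] at h8

lemma arith_aux {α σ Z W S U X R Rs : ℝ} (hα : 0 < α) (hσ : 0 < σ) (hZ : 0 < Z)
    (hW : 0 ≤ W) (hS : 0 ≤ S) (hU : 0 ≤ U) (hX : 0 ≤ X) (hR : 0 ≤ R) (hRs : 0 ≤ Rs)
    (F1 : σ * (Z * R ^ 2) ≤ W * S * U) (F2 : α * U ^ 2 ≤ Z * R ^ 2 + W * S * U)
    (F3 : σ * (Z * Rs ^ 2) ≤ X * Rs) (F4 : α * S ^ 2 ≤ Z * Rs ^ 2 + X * Rs) :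
    R ≤ (1 + σ) / (α * σ ^ 2) / Z * W * X := by
  have G2 : α * σ * U ≤ (1 + σ) * (W * S) := by
    rcases eq_or_lt_of_le hU with h | h
    · rw [← h, mul_zero]; positivity
    · have hh : α * σ * U * U ≤ (1 + σ) * (W * S) * U := by
        nlinarith [mul_le_mul_of_nonneg_left F2 (le_of_lt hσ)]
      exact le_of_mul_le_mul_right hh h
  have G3 : σ * Z * Rs ≤ X := by
    rcases eq_or_lt_of_le hRs with h | h
    · rw [← h, mul_zero]; exact hX
    · have hh : σ * Z * Rs * Rs ≤ X * Rs := by nlinarith [F3]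
      exact le_of_mul_le_mul_right hh h
  have G4 : α * σ ^ 2 * Z * S ^ 2 ≤ (1 + σ) * X ^ 2 := by
    nlinarith [mul_le_mul_of_nonneg_left F4 (by positivity : (0:ℝ) ≤ σ ^ 2 * Z),
      mul_self_le_mul_self (by positivity : (0:ℝ) ≤ σ * Z * Rs) G3,
      mul_le_mul_of_nonneg_left G3 (by positivity : (0:ℝ) ≤ σ * X)]
  have G5 : α * σ ^ 2 * Z * R ^ 2 ≤ (1 + σ) * (W ^ 2 * S ^ 2) := by
    nlinarith [mul_le_mul_of_nonneg_left F1 (by positivity : (0:ℝ) ≤ α * σ),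
      mul_le_mul_of_nonneg_left G2 (by positivity : (0:ℝ) ≤ W * S)]
  have G6 : (α * σ ^ 2 * Z * R) ^ 2 ≤ ((1 + σ) * (W * X)) ^ 2 := by
    nlinarith [mul_le_mul_of_nonneg_left G5 (by positivity : (0:ℝ) ≤ α * σ ^ 2 * Z),
      mul_le_mul_of_nonneg_left G4 (by positivity : (0:ℝ) ≤ (1 + σ) * W ^ 2)]
  have G7 : α * σ ^ 2 * Z * R ≤ (1 + σ) * (W * X) := by
    have h8 := Real.sqrt_le_sqrt G6
    rwa [Real.sqrt_sq (by positivity), Real.sqrt_sq (by positivity)] at h8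
  have heq : (1 + σ) / (α * σ ^ 2) / Z * W * X = (1 + σ) * (W * X) / (α * σ ^ 2 * Z) := by
    field_simp
  rw [heq, le_div_iff₀ (by positivity)]
  nlinarith [G7]

open MeasureTheory Set
open scoped InnerProductSpace ENNReal

noncomputable section

variable {V H : Type*}
  [NormedAddCommGroup V] [InnerProductSpace ℂ V] [CompleteSpace V]
  [NormedAddCommGroup H] [InnerProductSpace ℂ H] [CompleteSpace H]

/-- The open sector `S_θ = {z ∈ ℂ \ {0} : |arg z| < θ}`. -/
def sector (θ : ℝ) : Set ℂ := {z : ℂ | z ≠ 0 ∧ |z.arg| < θ}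

/-- `B w v = ⟪g, J v⟫_H` for all `v ∈ V`: `J w ∈ D(A)`, `A (J w) = g`. -/
def ActsOn (J : V →L[ℂ] H) (B : V →L⋆[ℂ] V →L[ℂ] ℂ) (w : V) (g : H) : Prop :=
  ∀ v : V, B w v = ⟪g, J v⟫_ℂ

set_option maxHeartbeats 1000000 in
/-- **Resolvent-difference estimate.** -/
theorem resolvent_difference_estimate
    (J : V →L[ℂ] H) (hJinj : Function.Injective J) (hJdense : DenseRange J)
    (τ : ℝ) (hτ : 0 < τ)
    (a : ℝ → V →L⋆[ℂ] V →L[ℂ] ℂ)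
    (M : ℝ) (hM : 0 < M)
    (hbdd : ∀ t ∈ Icc (0:ℝ) τ, ∀ u v : V, ‖a t u v‖ ≤ M * ‖u‖ * ‖v‖)
    (α : ℝ) (hα : 0 < α)
    (hcoer : ∀ t ∈ Icc (0:ℝ) τ, ∀ u : V, α * ‖u‖ ^ 2 ≤ (a t u u).re)
    (ω : ℝ → ℝ) (hω0 : ∀ r : ℝ, 0 ≤ ω r)
    (hreg : ∀ s ∈ Icc (0:ℝ) τ, ∀ t ∈ Icc (0:ℝ) τ, ∀ u v : V,
      ‖a t u v - a s u v‖ ≤ ω |t - s| * ‖u‖ * ‖v‖)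
    (θ : ℝ) (hθ₁ : Real.arctan (M / α) < θ) (hθ₂ : θ < Real.pi) :
    ∃ cθ : ℝ, 0 < cθ ∧ ∀ s ∈ Icc (0:ℝ) τ, ∀ t ∈ Icc (0:ℝ) τ,
      ∀ z : ℂ, z ≠ 0 → z ∉ sector θ → ∀ x : H,
        ∀ wt : V, ∀ gt : H, ActsOn J (a t) wt gt → z • J wt - gt = x →
        ∀ ws : V, ∀ gs : H, ActsOn J (a s) ws gs → z • J ws - gs = x →
          ‖J wt - J ws‖ ≤ cθ / ‖z‖ * ω |t - s| * ‖x‖ := by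
  have hMα : 0 < M / α := div_pos hM hα
  have hψ0 : 0 < Real.arctan (M / α) := by
    have := Real.arctan_strictMono hMα
    rwa [Real.arctan_zero] at this
  have hψπ2 : Real.arctan (M / α) < Real.pi / 2 := Real.arctan_lt_pi_div_two _
  have hσ : 0 < Real.sin (θ - Real.arctan (M / α)) :=
    Real.sin_pos_of_pos_of_lt_pi (by linarith) (by linarith)
  set σ := Real.sin (θ - Real.arctan (M / α)) with hσdef
  refine ⟨(1 + σ) / (α * σ ^ 2), by positivity, ?_⟩
  intro s hs t ht z hz hzs x wt gt hAt hxt ws gs hAs hxs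
  have hzarg : θ ≤ |z.arg| := by
    by_contra h
    exact hzs ⟨hz, lt_of_not_ge h⟩
  have hZ : 0 < ‖z‖ := norm_pos_iff.mpr hz
  set u := wt - ws with hu
  have hJu : J wt - J ws = J u := (map_sub J wt ws).symm
  have hW0 : 0 ≤ ω |t - s| := hω0 _
  have hgt : gt = z • J wt - x := by rw [← hxt]; abel
  have hgs : gs = z • J ws - x := by rw [← hxs]; abel
  have hgdiff : gt - gs = z • J u := by
    rw [hgt, hgs, ← hJu, smul_sub]; abel
  -- key identity for the difference
  have key : (starRingEnd ℂ) z * ((‖J u‖ ^ 2 : ℝ) : ℂ) - a t u u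
      = a t ws u - a s ws u := by
    have h1 : a t wt u - a s ws u = (starRingEnd ℂ) z * ((‖J u‖ ^ 2 : ℝ) : ℂ) := by
      rw [hAt u, hAs u, ← inner_sub_left, hgdiff, inner_smul_left,
        inner_self_eq_norm_sq_to_K]
      norm_cast
    have h2 : a t wt u = a t u u + a t ws u := by
      have h3 : wt = u + ws := by rw [hu]; abel
      rw [h3, map_add, ContinuousLinearMap.add_apply]
    linear_combination h2 - h1
  have hdb : ‖a t ws u - a s ws u‖ ≤ ω |t - s| * ‖ws‖ * ‖u‖ := hreg s hs t ht ws u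
  -- numerical range conditions
  have hμt : |(a t u u).im| ≤ M / α * (a t u u).re := by
    have h1 := hcoer t ht u
    have h2 := hbdd t ht u u
    have h3 : |(a t u u).im| ≤ ‖a t u u‖ := by
      exact Complex.abs_im_le_norm _
    have h4 : M * ‖u‖ * ‖u‖ = M / α * (α * ‖u‖ ^ 2) := by field_simp
    nlinarith [mul_le_mul_of_nonneg_left h1 (le_of_lt hMα)]
  have hμs : |(a s ws ws).im| ≤ M / α * (a s ws ws).re := by
    have h1 := hcoer s hs ws
    have h2 := hbdd s hs ws ws
    have h3 : |(a s ws ws).im| ≤ ‖a s ws ws‖ := by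
      exact Complex.abs_im_le_norm _
    have h4 : M * ‖ws‖ * ‖ws‖ = M / α * (α * ‖ws‖ ^ 2) := by field_simp
    nlinarith [mul_le_mul_of_nonneg_left h1 (le_of_lt hMα)]
  -- sector estimate at time t (difference equation)
  have F1 : σ * (‖z‖ * ‖J u‖ ^ 2) ≤ ω |t - s| * ‖ws‖ * ‖u‖ := by
    have h := sector_aux hM hα hθ₁ (le_of_lt hθ₂) hz hzarg hμt (sq_nonneg ‖J u‖)
    rw [key] at h
    exact h.trans hdb
  -- coercivity at time t
  have F2 : α * ‖u‖ ^ 2 ≤ ‖z‖ * ‖J u‖ ^ 2 + ω |t - s| * ‖ws‖ * ‖u‖ := by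
    have h1 := hcoer t ht u
    have h2 : a t u u = (starRingEnd ℂ) z * ((‖J u‖ ^ 2 : ℝ) : ℂ)
        - (a t ws u - a s ws u) := by linear_combination -key
    have h3 : (a t u u).re = z.re * ‖J u‖ ^ 2 - (a t ws u - a s ws u).re := by
      rw [h2, Complex.sub_re, Complex.mul_re]
      simp [← Complex.ofReal_pow]
    have h4 : z.re ≤ ‖z‖ := by
      exact Complex.re_le_norm z
    have h5 : -(a t ws u - a s ws u).re ≤ ‖a t ws u - a s ws u‖ := by
      calc -(a t ws u - a s ws u).re ≤ |(a t ws u - a s ws u).re| := neg_le_abs _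
        _ ≤ ‖_‖ := Complex.abs_re_le_norm _
    nlinarith [hdb, sq_nonneg ‖J u‖]
  -- resolvent equation at time s
  have keyS : (starRingEnd ℂ) z * ((‖J ws‖ ^ 2 : ℝ) : ℂ) - a s ws ws = ⟪x, J ws⟫_ℂ := by
    have h1 : a s ws ws = (starRingEnd ℂ) z * ((‖J ws‖ ^ 2 : ℝ) : ℂ) - ⟪x, J ws⟫_ℂ := by
      rw [hAs ws, hgs, inner_sub_left, inner_smul_left, inner_self_eq_norm_sq_to_K]
      norm_cast
    linear_combination -h1
  have F3 : σ * (‖z‖ * ‖J ws‖ ^ 2) ≤ ‖x‖ * ‖J ws‖ := by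
    have h := sector_aux hM hα hθ₁ (le_of_lt hθ₂) hz hzarg hμs (sq_nonneg ‖J ws‖)
    rw [keyS] at h
    exact h.trans (norm_inner_le_norm x (J ws))
  have F4 : α * ‖ws‖ ^ 2 ≤ ‖z‖ * ‖J ws‖ ^ 2 + ‖x‖ * ‖J ws‖ := by
    have h1 := hcoer s hs ws
    have h2 : a s ws ws = (starRingEnd ℂ) z * ((‖J ws‖ ^ 2 : ℝ) : ℂ) - ⟪x, J ws⟫_ℂ := by
      linear_combination -keyS
    have h3 : (a s ws ws).re = z.re * ‖J ws‖ ^ 2 - (⟪x, J ws⟫_ℂ).re := by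
      rw [h2, Complex.sub_re, Complex.mul_re]
      simp [← Complex.ofReal_pow]
    have h4 : z.re ≤ ‖z‖ := by
      exact Complex.re_le_norm z
    have h5 : -(⟪x, J ws⟫_ℂ).re ≤ ‖x‖ * ‖J ws‖ := by
      calc -(⟪x, J ws⟫_ℂ).re ≤ |(⟪x, J ws⟫_ℂ).re| := neg_le_abs _
        _ ≤ ‖⟪x, J ws⟫_ℂ‖ := by
            exact Complex.abs_re_le_norm _
        _ ≤ ‖x‖ * ‖J ws‖ := norm_inner_le_norm x (J ws)
    nlinarith [sq_nonneg ‖J ws‖]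
  rw [hJu]
  exact arith_aux hα hσ hZ hW0 (norm_nonneg ws) (norm_nonneg u) (norm_nonneg x)
    (norm_nonneg (J u)) (norm_nonneg (J ws)) F1 F2 F3 F4
end
end

section
/- Let p ∈ (1,∞), let (t_n) be a dense sequence in [0,1] and (c_n) a summable sequence of positive reals, and define a(t) := 1 + Σ_n c_n |t − t_n|^{−1/p} for t ∈ [0,1]. Then: (i) a ∈ L_q(0,1) for every 1 ≤ q < p, but a ∉ L_p(I) for every nondegenerate subinterval I ⊆ [0,1]; (ii) the solution x(t) = ∫₀ᵗ exp(−∫ₛᵗ a(r) dr) ds of the scalar problem x′(t) + a(t)x(t) = 1, x(0) = 0, satisfies a(t)·x(t) ≥ C·t·a(t) for all t ∈ [0,1], where C = exp(−∫₀¹ a(r) dr) > 0; consequently a·x ∉ L_p(α,β) for any 0 < α < β ≤ 1, so this problem fails maximal L_p-regularity. -/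
/- Failure of maximal `L_p`-regularity for a scalar ODE (Haak–Ouhabaz, Example 1.4, after
Batty–Chill–Srivastava): let `a(t) = 1 + ∑ₙ cₙ |t - tₙ|^{-1/p}` with `(tₙ)` dense in `[0,1]`
and `(cₙ)` summable and positive.  Then
(i) `a ∈ L_q(0,1)` for `1 ≤ q < p` but `a ∉ L_p(I)` for every nondegenerate interval
`I ⊆ [0,1]`;
(ii) the solution `x(t) = ∫₀ᵗ exp(-∫ₛᵗ a) ds` of `x' + a x = 1`, `x(0) = 0`, satisfies
`a(t) x(t) ≥ C t a(t)` on `[0,1]` with `C = exp(-∫₀¹ a) > 0`; consequently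
`a·x ∉ L_p(α,β)` for all `0 < α < β ≤ 1`, so the problem fails maximal `L_p`-regularity. -/

open MeasureTheory Set Filter
open scoped ENNReal Topology

noncomputable section

lemma aux_meas_abs_rpow (t₀ r : ℝ) (hr : r ≠ 0) : Measurable fun t : ℝ => |t - t₀| ^ r := by
  have h : (fun t : ℝ => |t - t₀| ^ r)
      = fun t => if t - t₀ = 0 then 0 else Real.exp (Real.log |t - t₀| * r) := by
    funext t
    by_cases h0 : t - t₀ = 0
    · simp [h0, Real.zero_rpow hr]
    · have hpos : 0 < |t - t₀| := abs_pos.mpr h0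
      rw [if_neg h0, Real.rpow_def_of_pos hpos]
  rw [h]
  have hms : MeasurableSet {t : ℝ | t - t₀ = 0} := by
    have : {t : ℝ | t - t₀ = 0} = {t₀} := by ext t; simp [sub_eq_zero]
    rw [this]; exact measurableSet_singleton _
  exact Measurable.ite hms measurable_const
    (((Real.measurable_log.comp ((measurable_id.sub_const t₀).abs)).mul_const r).exp)

lemma aux_shift_Ioc (f : ℝ → ℝ≥0∞) (hf : Measurable f) (A B t₀ : ℝ) :
    ∫⁻ t in Ioc A B, f (t - t₀) = ∫⁻ u in Ioc (A - t₀) (B - t₀), f u := by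
  rw [← lintegral_indicator measurableSet_Ioc, ← lintegral_indicator measurableSet_Ioc]
  have key := (measurePreserving_add_right volume t₀).lintegral_comp
    (f := (Ioc A B).indicator (fun t => f (t - t₀)))
    ((hf.comp (measurable_id.sub_const t₀)).indicator measurableSet_Ioc)
  rw [← key]
  congr 1
  funext u
  by_cases h : u + t₀ ∈ Ioc A B
  · have h' : u ∈ Ioc (A - t₀) (B - t₀) := by
      obtain ⟨h1, h2⟩ := h; exact ⟨by linarith, by linarith⟩
    simp only [indicator_of_mem h, indicator_of_mem h', add_sub_cancel_right]
  · have h' : u ∉ Ioc (A - t₀) (B - t₀) := by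
      intro hc; exact h ⟨by linarith [hc.1], by linarith [hc.2]⟩
    simp only [indicator_of_notMem h, indicator_of_notMem h']

lemma aux_J_lt_top {r : ℝ} (hr1 : -1 < r) :
    ∫⁻ u in Ioc (-1 : ℝ) 1, ENNReal.ofReal (|u| ^ r) < ∞ := by
  have hsplit : (Ioc (-1 : ℝ) 1) = Ioc (-1 : ℝ) 0 ∪ Ioc (0 : ℝ) 1 :=
    (Ioc_union_Ioc_eq_Ioc (by norm_num) (by norm_num)).symm
  rw [hsplit, lintegral_union measurableSet_Ioc (Ioc_disjoint_Ioc_of_le le_rfl)]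
  have hfin : ∀ g : ℝ → ℝ, ∀ A B : ℝ, IntegrableOn g (Ioc A B) →
      (∀ u ∈ Ioc A B, |u| ^ r ≤ |g u|) →
      ∫⁻ u in Ioc A B, ENNReal.ofReal (|u| ^ r) < ∞ := by
    intro g A B hg hle
    have : ∫⁻ u in Ioc A B, ENNReal.ofReal (|u| ^ r) ≤ ∫⁻ u in Ioc A B, (‖g u‖₊ : ℝ≥0∞) := by
      apply setLIntegral_mono' measurableSet_Ioc
      intro u hu
      rw [← enorm_eq_nnnorm, Real.enorm_eq_ofReal_abs]
      exact ENNReal.ofReal_le_ofReal (hle u hu)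
    exact lt_of_le_of_lt this hg.2
  rw [ENNReal.add_lt_top]
  constructor
  · have hint : IntervalIntegrable (fun u : ℝ => (-u) ^ r) volume (-1 : ℝ) 0 := by
      have h := intervalIntegral.intervalIntegrable_rpow' hr1 (a := (1:ℝ)) (b := 0)
      rw [IntervalIntegrable.iff_comp_neg] at h
      simpa using h
    have hIO : IntegrableOn (fun u : ℝ => (-u) ^ r) (Ioc (-1 : ℝ) 0) := by
      rw [intervalIntegrable_iff_integrableOn_Ioc_of_le (by norm_num : (-1:ℝ) ≤ 0)] at hint
      exact hint
    apply hfin _ _ _ hIO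
    intro u hu
    rw [abs_of_nonpos hu.2]
    exact le_abs_self _
  · have hint : IntervalIntegrable (fun u : ℝ => u ^ r) volume (0 : ℝ) 1 :=
      intervalIntegral.intervalIntegrable_rpow' hr1
    have hIO : IntegrableOn (fun u : ℝ => u ^ r) (Ioc (0 : ℝ) 1) := by
      rw [intervalIntegrable_iff_integrableOn_Ioc_of_le (by norm_num : (0:ℝ) ≤ 1)] at hint
      exact hint
    apply hfin _ _ _ hIO
    intro u hu
    rw [abs_of_pos hu.1]
    exact le_abs_self _

lemma aux_single_bound {t₀ : ℝ} (ht₀ : t₀ ∈ Icc (0:ℝ) 1) {r : ℝ} (hr : r ≠ 0) :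
    ∫⁻ t in Ioc (0:ℝ) 1, ENNReal.ofReal (|t - t₀| ^ r)
      ≤ ∫⁻ u in Ioc (-1 : ℝ) 1, ENNReal.ofReal (|u| ^ r) := by
  have hm : Measurable fun u : ℝ => ENNReal.ofReal (|u| ^ r) := by
    have := aux_meas_abs_rpow 0 r hr
    have h2 := ENNReal.measurable_ofReal.comp this
    simp only [sub_zero] at h2
    exact h2
  have := aux_shift_Ioc (fun u => ENNReal.ofReal (|u| ^ r)) hm 0 1 t₀
  rw [this]
  exact lintegral_mono_set (Ioc_subset_Ioc (by linarith [ht₀.2]) (by linarith [ht₀.1]))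

lemma aux_tsum_toReal {f : ℕ → ℝ} (hf : ∀ n, 0 ≤ f n) :
    ∑' n, f n = (∑' n, ENNReal.ofReal (f n)).toReal := by
  by_cases hs : Summable f
  · rw [← ENNReal.ofReal_tsum_of_nonneg hf hs, ENNReal.toReal_ofReal (tsum_nonneg hf)]
  · rw [tsum_eq_zero_of_not_summable hs]
    have : ∑' n, ENNReal.ofReal (f n) = ∞ := by
      by_contra h
      apply hs
      have := ENNReal.summable_toReal h
      refine this.congr fun n => ?_
      rw [ENNReal.toReal_ofReal (hf n)]
    rw [this, ENNReal.toReal_top]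

lemma aux_eLpNorm_eq {q : ℝ} (hq : 0 < q) (f : ℝ → ℝ) (μ : Measure ℝ) :
    eLpNorm f (ENNReal.ofReal q) μ = (∫⁻ t, ENNReal.ofReal (|f t| ^ q) ∂μ) ^ (1/q) := by
  have hofq : ENNReal.ofReal q ≠ 0 := by
    simp only [ne_eq, ENNReal.ofReal_eq_zero, not_le]; exact hq
  rw [eLpNorm_eq_lintegral_rpow_enorm_toReal hofq ENNReal.ofReal_ne_top,
    ENNReal.toReal_ofReal hq.le]
  congr 1
  apply lintegral_congr
  intro t
  rw [← Real.norm_eq_abs, ← ENNReal.ofReal_rpow_of_nonneg (norm_nonneg _) hq.le,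
    ofReal_norm]

lemma aux_inv_div {ε : ℝ} (hε : 0 < ε) :
    ∫⁻ u in Ioc (0:ℝ) ε, ENNReal.ofReal (|u| ^ (-1:ℝ)) = ∞ := by
  by_contra h
  have hmeas : Measurable fun u : ℝ => |u| ^ (-1:ℝ) := by
    have := aux_meas_abs_rpow 0 (-1) (by norm_num)
    simpa using this
  have hInt : IntegrableOn (fun u : ℝ => |u| ^ (-1:ℝ)) (Ioc 0 ε) := by
    refine ⟨hmeas.aestronglyMeasurable, ?_⟩
    rw [hasFiniteIntegral_iff_ofReal (Eventually.of_forall fun u =>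
      Real.rpow_nonneg (abs_nonneg _) _)]
    exact lt_top_iff_ne_top.mpr h
  have hInt2 : IntegrableOn (fun u : ℝ => u ^ (-1:ℝ)) (Ioo 0 ε) := by
    refine IntegrableOn.congr_fun (hInt.mono_set Ioo_subset_Ioc_self) ?_ measurableSet_Ioo
    intro u hu
    simp only
    rw [abs_of_pos hu.1]
  rw [intervalIntegral.integrableOn_Ioo_rpow_iff hε] at hInt2
  norm_num at hInt2

lemma aux_lower_bound {a x : ℝ → ℝ}
    (hint : IntegrableOn a (Ioc (0:ℝ) 1) volume) (hage : ∀ t, 1 ≤ a t)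
    (hx : ∀ t, x t = ∫ s in (0:ℝ)..t, Real.exp (-∫ r in s..t, a r)) :
    ∀ t ∈ Icc (0:ℝ) 1, Real.exp (-∫ r in (0:ℝ)..1, a r) * t * a t ≤ a t * x t := by
  intro t ht
  set C := Real.exp (-∫ r in (0:ℝ)..1, a r) with hC
  have hanonneg : ∀ r, 0 ≤ a r := fun r => le_trans zero_le_one (hage r)
  have hii : IntervalIntegrable a volume 0 1 :=
    (intervalIntegrable_iff_integrableOn_Ioc_of_le zero_le_one).mpr hint
  have key : ∀ s ∈ Icc (0:ℝ) t, C ≤ Real.exp (-∫ r in s..t, a r) := by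
    intro s hs
    rw [hC, Real.exp_le_exp, neg_le_neg_iff]
    exact intervalIntegral.integral_mono_interval hs.1 hs.2 ht.2
      (Eventually.of_forall fun r => hanonneg r) hii
  have hIcc : IntegrableOn a (Icc 0 t) volume := by
    rw [integrableOn_Icc_iff_integrableOn_Ioc]
    exact hint.mono_set (Ioc_subset_Ioc le_rfl ht.2)
  have hcont : ContinuousOn (fun s => ∫ r in s..t, a r) (Icc 0 t) := by
    have := intervalIntegral.continuousOn_primitive_interval_left
      (f := a) (μ := volume) (a := 0) (b := t) (by rwa [uIcc_of_le ht.1])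
    rwa [uIcc_of_le ht.1] at this
  have hFi : IntervalIntegrable (fun s => Real.exp (-∫ r in s..t, a r)) volume 0 t := by
    apply ContinuousOn.intervalIntegrable
    rw [uIcc_of_le ht.1]
    exact Real.continuous_exp.comp_continuousOn hcont.neg
  have hxt : C * t ≤ x t := by
    rw [hx t]
    have := intervalIntegral.integral_mono_on ht.1 (intervalIntegrable_const (c := C)) hFi key
    rw [intervalIntegral.integral_const, sub_zero, smul_eq_mul, mul_comm] at this
    exact this
  calc C * t * a t ≤ x t * a t := mul_le_mul_of_nonneg_right hxt (hanonneg t)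
    _ = a t * x t := mul_comm _ _

section Main

variable {p : ℝ} (hp : 1 < p) {ts : ℕ → ℝ} (hts : ∀ n, ts n ∈ Icc (0:ℝ) 1)
  (htsdense : Icc (0:ℝ) 1 ⊆ closure (Set.range ts))
  {c : ℕ → ℝ} (hc : ∀ n, 0 < c n) (hcsum : Summable c)
  {a : ℝ → ℝ} (ha : ∀ t, a t = 1 + ∑' n, c n * |t - ts n| ^ (-(1/p)))

include hp hc ha in
lemma aux_a_meas : Measurable a := by
  have hp0 : (0:ℝ) < p := by linarith
  have hr0 : -(1/p) ≠ 0 := neg_ne_zero.mpr (by positivity)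
  have haf : a = fun t =>
      1 + (∑' n, ENNReal.ofReal (c n * |t - ts n| ^ (-(1/p)))).toReal := by
    funext t
    rw [ha t, aux_tsum_toReal (fun n => mul_nonneg (hc n).le (Real.rpow_nonneg (abs_nonneg _) _))]
  rw [haf]
  refine measurable_const.add (Measurable.ennreal_toReal ?_)
  exact Measurable.ennreal_tsum fun n =>
    ENNReal.measurable_ofReal.comp ((aux_meas_abs_rpow (ts n) _ hr0).const_mul (c n))

include hp hc ha in
lemma aux_a_ge_one : ∀ t, 1 ≤ a t := by
  intro t
  have hp0 : (0:ℝ) < p := by linarith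
  rw [ha t]
  have : 0 ≤ ∑' n, c n * |t - ts n| ^ (-(1/p)) :=
    tsum_nonneg fun n => mul_nonneg (hc n).le (Real.rpow_nonneg (abs_nonneg _) _)
  linarith

include hp hts hc hcsum ha in
lemma aux_memLp {q : ℝ} (hq1 : 1 ≤ q) (hqp : q < p) :
    MemLp a (ENNReal.ofReal q) (volume.restrict (Ioc (0:ℝ) 1)) := by
  have hp0 : (0:ℝ) < p := by linarith
  have hq0 : (0:ℝ) < q := by linarith
  have hq0' : (0:ℝ) ≤ q := hq0.le
  have hqne : q ≠ 0 := hq0.ne'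
  set μ₀ := volume.restrict (Ioc (0:ℝ) 1) with hμ₀
  haveI : IsFiniteMeasure μ₀ := by
    constructor
    rw [hμ₀, Measure.restrict_apply_univ, Real.volume_Ioc]
    exact ENNReal.ofReal_lt_top
  set r0 : ℝ := -(1/p) with hr0def
  have hr0ne : r0 ≠ 0 := by rw [hr0def]; exact neg_ne_zero.mpr (by positivity)
  set r : ℝ := r0 * q with hrdef
  have hrne : r ≠ 0 := mul_ne_zero hr0ne hqne
  have hr1 : -1 < r := by
    rw [hrdef, hr0def]
    rw [neg_lt, ← neg_mul, neg_neg]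
    rw [div_mul_eq_mul_div, one_mul, div_lt_one hp0]
    exact hqp
  set g : ℕ → ℝ → ℝ := fun n t => c n * |t - ts n| ^ r0 with hgdef
  have hgmeas : ∀ n, Measurable (g n) := fun n =>
    (aux_meas_abs_rpow (ts n) r0 hr0ne).const_mul (c n)
  have hgnonneg : ∀ n t, 0 ≤ g n t := fun n t =>
    mul_nonneg (hc n).le (Real.rpow_nonneg (abs_nonneg _) _)
  set J : ℝ≥0∞ := ∫⁻ u in Ioc (-1 : ℝ) 1, ENNReal.ofReal (|u| ^ r) with hJdef
  have hJlt : J < ∞ := aux_J_lt_top hr1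
  have hsn : ∀ f : ℝ → ℝ, eLpNorm f (ENNReal.ofReal q) μ₀
      = (∫⁻ t in Ioc (0:ℝ) 1, ENNReal.ofReal (|f t| ^ q)) ^ (1/q) := fun f =>
    aux_eLpNorm_eq hq0 f μ₀
  have hterm : ∀ n, eLpNorm (g n) (ENNReal.ofReal q) μ₀ ≤ ENNReal.ofReal (c n) * J ^ (1/q) := by
    intro n
    rw [hsn]
    have hptw : ∀ t, ENNReal.ofReal (|g n t| ^ q)
        = ENNReal.ofReal (c n ^ q) * ENNReal.ofReal (|t - ts n| ^ r) := by
      intro t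
      rw [abs_of_nonneg (hgnonneg n t), hgdef]
      simp only
      rw [Real.mul_rpow (hc n).le (Real.rpow_nonneg (abs_nonneg _) _),
        ← Real.rpow_mul (abs_nonneg _), ← hrdef,
        ENNReal.ofReal_mul (Real.rpow_nonneg (hc n).le q)]
    calc (∫⁻ t in Ioc (0:ℝ) 1, ENNReal.ofReal (|g n t| ^ q)) ^ (1/q)
        = (ENNReal.ofReal (c n ^ q) * ∫⁻ t in Ioc (0:ℝ) 1,
            ENNReal.ofReal (|t - ts n| ^ r)) ^ (1/q) := by
          rw [← lintegral_const_mul' _ _ ENNReal.ofReal_ne_top]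
          congr 1
          exact lintegral_congr fun t => hptw t
      _ ≤ (ENNReal.ofReal (c n ^ q) * J) ^ (1/q) := by
          apply ENNReal.rpow_le_rpow _ (one_div_nonneg.mpr hq0')
          exact mul_le_mul_right (aux_single_bound (hts n) hrne) _
      _ = ENNReal.ofReal (c n) * J ^ (1/q) := by
          rw [ENNReal.mul_rpow_of_nonneg _ _ (one_div_nonneg.mpr hq0')]
          congr 1
          rw [ENNReal.ofReal_rpow_of_nonneg (Real.rpow_nonneg (hc n).le q)
              (one_div_nonneg.mpr hq0'),
            ← Real.rpow_mul (hc n).le, mul_one_div_cancel hqne, Real.rpow_one]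
  set s : ℕ → ℝ → ℝ := fun N => (fun _ => (1:ℝ)) + ∑ n ∈ Finset.range N, g n with hsdef
  have hsum_eq : ∀ N, (∑ n ∈ Finset.range N, g n) = fun t => ∑ n ∈ Finset.range N, g n t := by
    intro N; ext t; simp
  have hgsum_meas : ∀ N, Measurable (∑ n ∈ Finset.range N, g n) := by
    intro N; rw [hsum_eq]; exact Finset.measurable_sum _ fun n _ => hgmeas n
  have hsmeas : ∀ N, Measurable (s N) := fun N =>
    measurable_const.add (hgsum_meas N)
  have hsapply : ∀ N t, s N t = 1 + ∑ n ∈ Finset.range N, g n t := by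
    intro N t; simp [hsdef]
  set M : ℝ≥0∞ := eLpNorm (fun _ => (1:ℝ)) (ENNReal.ofReal q) μ₀
      + ENNReal.ofReal (∑' n, c n) * J ^ (1/q) with hMdef
  have hMlt : M < ∞ := by
    rw [hMdef]
    apply ENNReal.add_lt_top.mpr
    constructor
    · exact (memLp_const (1:ℝ)).2
    · exact ENNReal.mul_lt_top ENNReal.ofReal_lt_top
        (ENNReal.rpow_lt_top_of_nonneg (one_div_nonneg.mpr hq0') hJlt.ne)
  have hsbound : ∀ N, eLpNorm (s N) (ENNReal.ofReal q) μ₀ ≤ M := by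
    intro N
    rw [hsdef]
    refine le_trans (eLpNorm_add_le aestronglyMeasurable_const
      ((hgsum_meas N).aestronglyMeasurable)
      (by rwa [ENNReal.one_le_ofReal])) ?_
    rw [hMdef]
    apply add_le_add_right
    refine le_trans (eLpNorm_sum_le (fun n _ => (hgmeas n).aestronglyMeasurable)
      (by rwa [ENNReal.one_le_ofReal])) ?_
    calc ∑ n ∈ Finset.range N, eLpNorm (g n) (ENNReal.ofReal q) μ₀
        ≤ ∑ n ∈ Finset.range N, ENNReal.ofReal (c n) * J ^ (1/q) :=
          Finset.sum_le_sum fun n _ => hterm n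
      _ = (∑ n ∈ Finset.range N, ENNReal.ofReal (c n)) * J ^ (1/q) := by
          rw [Finset.sum_mul]
      _ ≤ (∑' n, ENNReal.ofReal (c n)) * J ^ (1/q) :=
          mul_le_mul_left (ENNReal.sum_le_tsum _) _
      _ = ENNReal.ofReal (∑' n, c n) * J ^ (1/q) := by
          rw [ENNReal.ofReal_tsum_of_nonneg (fun n => (hc n).le) hcsum]
  have hptwise : ∀ t, ENNReal.ofReal (|a t| ^ q)
      ≤ liminf (fun N => ENNReal.ofReal (|s N t| ^ q)) atTop := by
    intro t
    by_cases hsum : Summable fun n => g n t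
    · have hT : Tendsto (fun N => s N t) atTop (𝓝 (a t)) := by
        rw [ha t]
        have := hsum.hasSum.tendsto_sum_nat
        have h2 : Tendsto (fun N => 1 + ∑ n ∈ Finset.range N, g n t) atTop
            (𝓝 (1 + ∑' n, g n t)) := tendsto_const_nhds.add this
        refine h2.congr fun N => (hsapply N t).symm
      have hΦ : Continuous fun y : ℝ => ENNReal.ofReal (|y| ^ q) :=
        ENNReal.continuous_ofReal.comp
          ((Real.continuous_rpow_const hq0').comp continuous_abs)
      have := ((hΦ.tendsto (a t)).comp hT).liminf_eq
      exact le_of_eq this.symm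
    · have hat : a t = 1 := by
        rw [ha t, tsum_eq_zero_of_not_summable hsum, add_zero]
      have h1 : ∀ N, (1:ℝ≥0∞) ≤ ENNReal.ofReal (|s N t| ^ q) := by
        intro N
        have hs1 : (1:ℝ) ≤ s N t := by
          rw [hsapply]
          have : 0 ≤ ∑ n ∈ Finset.range N, g n t :=
            Finset.sum_nonneg fun n _ => hgnonneg n t
          linarith
        have : (1:ℝ) ≤ |s N t| ^ q := by
          rw [← Real.one_rpow q]
          apply Real.rpow_le_rpow zero_le_one _ hq0'
          rw [abs_of_nonneg (by linarith)]
          exact hs1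
        rw [← ENNReal.ofReal_one]
        exact ENNReal.ofReal_le_ofReal this
      have : (1:ℝ≥0∞) ≤ liminf (fun N => ENNReal.ofReal (|s N t| ^ q)) atTop := by
        refine le_trans (le_of_eq ?_) (liminf_le_liminf (Eventually.of_forall h1))
        exact (liminf_const 1).symm
      refine le_trans (le_of_eq ?_) this
      rw [hat]; simp
  have hmeasN : ∀ N, Measurable fun t => ENNReal.ofReal (|s N t| ^ q) := by
    intro N
    exact ENNReal.measurable_ofReal.comp (((hsmeas N).abs).pow_const q)
  have hLN : ∀ N, ∫⁻ t in Ioc (0:ℝ) 1, ENNReal.ofReal (|s N t| ^ q) ≤ M ^ q := by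
    intro N
    have h1 := hsbound N
    rw [hsn (s N)] at h1
    have h2 := ENNReal.rpow_le_rpow h1 hq0'
    rwa [← ENNReal.rpow_mul, one_div_mul_cancel hqne, ENNReal.rpow_one] at h2
  have hkey : ∫⁻ t in Ioc (0:ℝ) 1, ENNReal.ofReal (|a t| ^ q) ≤ M ^ q := by
    calc ∫⁻ t in Ioc (0:ℝ) 1, ENNReal.ofReal (|a t| ^ q)
        ≤ ∫⁻ t in Ioc (0:ℝ) 1,
            liminf (fun N => ENNReal.ofReal (|s N t| ^ q)) atTop :=
          lintegral_mono fun t => hptwise t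
      _ ≤ liminf (fun N => ∫⁻ t in Ioc (0:ℝ) 1,
            ENNReal.ofReal (|s N t| ^ q)) atTop :=
          lintegral_liminf_le fun N => hmeasN N
      _ ≤ M ^ q := liminf_le_of_frequently_le' (Frequently.of_forall hLN)
  constructor
  · exact (aux_a_meas hp hc ha).aestronglyMeasurable
  · rw [hsn a]
    calc (∫⁻ t in Ioc (0:ℝ) 1, ENNReal.ofReal (|a t| ^ q)) ^ (1/q)
        ≤ (M ^ q) ^ (1/q) := ENNReal.rpow_le_rpow hkey (one_div_nonneg.mpr hq0')
      _ = M := by rw [← ENNReal.rpow_mul, mul_one_div_cancel hqne, ENNReal.rpow_one]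
      _ < ∞ := hMlt

include hp hts hc hcsum in
lemma aux_summable_ae :
    ∀ᵐ t ∂(volume.restrict (Ioc (0:ℝ) 1)),
      Summable fun n => c n * |t - ts n| ^ (-(1/p)) := by
  have hp0 : (0:ℝ) < p := by linarith
  have hr0ne : -(1/p) ≠ 0 := neg_ne_zero.mpr (by positivity)
  have hr01 : -1 < -(1/p) := by
    rw [neg_lt_neg_iff, div_lt_one hp0]; exact hp
  set gE : ℕ → ℝ → ℝ≥0∞ := fun n t => ENNReal.ofReal (c n * |t - ts n| ^ (-(1/p))) with hgE
  have hgEmeas : ∀ n, Measurable (gE n) := fun n =>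
    ENNReal.measurable_ofReal.comp ((aux_meas_abs_rpow (ts n) _ hr0ne).const_mul (c n))
  have hGfin : ∫⁻ t in Ioc (0:ℝ) 1, ∑' n, gE n t < ∞ := by
    rw [lintegral_tsum fun n => (hgEmeas n).aemeasurable]
    calc ∑' n, ∫⁻ t in Ioc (0:ℝ) 1, gE n t
        ≤ ∑' n, ENNReal.ofReal (c n) *
            ∫⁻ u in Ioc (-1:ℝ) 1, ENNReal.ofReal (|u| ^ (-(1/p))) := by
          apply ENNReal.tsum_le_tsum
          intro n
          have : ∀ t, gE n t = ENNReal.ofReal (c n) * ENNReal.ofReal (|t - ts n| ^ (-(1/p))) := by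
            intro t; rw [hgE]; exact ENNReal.ofReal_mul (hc n).le
          calc ∫⁻ t in Ioc (0:ℝ) 1, gE n t
              = ENNReal.ofReal (c n) *
                  ∫⁻ t in Ioc (0:ℝ) 1, ENNReal.ofReal (|t - ts n| ^ (-(1/p))) := by
                rw [← lintegral_const_mul' _ _ ENNReal.ofReal_ne_top]
                exact lintegral_congr this
            _ ≤ _ := mul_le_mul_right (aux_single_bound (hts n) hr0ne) _
      _ = ENNReal.ofReal (∑' n, c n) *
            ∫⁻ u in Ioc (-1:ℝ) 1, ENNReal.ofReal (|u| ^ (-(1/p))) := by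
          rw [ENNReal.tsum_mul_right,
            ENNReal.ofReal_tsum_of_nonneg (fun n => (hc n).le) hcsum]
      _ < ∞ := ENNReal.mul_lt_top ENNReal.ofReal_lt_top (aux_J_lt_top hr01)
  have hae := ae_lt_top (Measurable.ennreal_tsum fun n => hgEmeas n) hGfin.ne
  filter_upwards [hae] with t ht
  have hsum := ENNReal.summable_toReal ht.ne
  refine hsum.congr fun n => ?_
  rw [hgE]
  exact ENNReal.toReal_ofReal (mul_nonneg (hc n).le (Real.rpow_nonneg (abs_nonneg _) _))

include hp hts htsdense hc hcsum ha in
lemma aux_not_memLp {α β : ℝ} (hα : 0 ≤ α) (hαβ : α < β) (hβ : β ≤ 1) :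
    ¬ MemLp a (ENNReal.ofReal p) (volume.restrict (Ioc α β)) := by
  have hp0 : (0:ℝ) < p := by linarith
  obtain ⟨n₀, ht₀⟩ : ∃ n₀, ts n₀ ∈ Ioo α β := by
    have hm : (α + β)/2 ∈ Icc (0:ℝ) 1 := ⟨by linarith, by linarith⟩
    have hcl := htsdense hm
    rw [Metric.mem_closure_iff] at hcl
    obtain ⟨y, ⟨n₀, rfl⟩, hd⟩ := hcl ((β - α)/2) (by linarith)
    rw [Real.dist_eq, abs_sub_lt_iff] at hd
    exact ⟨n₀, by constructor <;> [linarith [hd.2]; linarith [hd.1]]⟩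
  set t₀ := ts n₀ with ht₀def
  intro hmem
  have hfin := hmem.2
  rw [aux_eLpNorm_eq hp0] at hfin
  have hlin : ∫⁻ t in Ioc α β, ENNReal.ofReal (|a t| ^ p) = ∞ := by
    have haeb : ∀ᵐ t ∂(volume.restrict (Ioc α β)),
        ENNReal.ofReal (c n₀ ^ p) * ENNReal.ofReal (|t - t₀| ^ (-1:ℝ))
          ≤ ENNReal.ofReal (|a t| ^ p) := by
      have hs := ae_restrict_of_ae_restrict_of_subset
        (Ioc_subset_Ioc hα hβ) (aux_summable_ae hp hts hc hcsum)
      filter_upwards [hs] with t htsum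
      have hg0 : ∀ n, 0 ≤ c n * |t - ts n| ^ (-(1/p)) := fun n =>
        mul_nonneg (hc n).le (Real.rpow_nonneg (abs_nonneg _) _)
      have hle1 : c n₀ * |t - t₀| ^ (-(1/p)) ≤ a t := by
        rw [ha t]
        have h1 : c n₀ * |t - t₀| ^ (-(1/p)) ≤ ∑' n, c n * |t - ts n| ^ (-(1/p)) :=
          Summable.le_tsum htsum n₀ fun n _ => hg0 n
        linarith
      have h2 : (c n₀ * |t - t₀| ^ (-(1/p))) ^ p ≤ |a t| ^ p := by
        apply Real.rpow_le_rpow (hg0 n₀) _ hp0.le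
        exact hle1.trans (le_abs_self _)
      have h3 : (c n₀ * |t - t₀| ^ (-(1/p))) ^ p
          = c n₀ ^ p * |t - t₀| ^ (-1:ℝ) := by
        rw [Real.mul_rpow (hc n₀).le (Real.rpow_nonneg (abs_nonneg _) _),
          ← Real.rpow_mul (abs_nonneg _)]
        congr 2
        field_simp
      calc ENNReal.ofReal (c n₀ ^ p) * ENNReal.ofReal (|t - t₀| ^ (-1:ℝ))
          = ENNReal.ofReal ((c n₀ * |t - t₀| ^ (-(1/p))) ^ p) := by
            rw [h3, ENNReal.ofReal_mul (Real.rpow_nonneg (hc n₀).le p)]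
        _ ≤ ENNReal.ofReal (|a t| ^ p) := ENNReal.ofReal_le_ofReal h2
    have hge := lintegral_mono_ae haeb
    have hlow : ∫⁻ t in Ioc α β,
        ENNReal.ofReal (c n₀ ^ p) * ENNReal.ofReal (|t - t₀| ^ (-1:ℝ)) = ∞ := by
      rw [lintegral_const_mul' _ _ ENNReal.ofReal_ne_top]
      have hsub : ∫⁻ t in Ioc t₀ β, ENNReal.ofReal (|t - t₀| ^ (-1:ℝ))
          ≤ ∫⁻ t in Ioc α β, ENNReal.ofReal (|t - t₀| ^ (-1:ℝ)) :=
        lintegral_mono_set (Ioc_subset_Ioc ht₀.1.le le_rfl)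
      have hm1 : Measurable fun u : ℝ => ENNReal.ofReal (|u| ^ (-1:ℝ)) := by
        have := aux_meas_abs_rpow 0 (-1) (by norm_num)
        have h2 := ENNReal.measurable_ofReal.comp this
        simp only [sub_zero] at h2
        exact h2
      have hshift := aux_shift_Ioc (fun u => ENNReal.ofReal (|u| ^ (-1:ℝ))) hm1 t₀ β t₀
      rw [sub_self] at hshift
      have hdiv : ∫⁻ t in Ioc t₀ β, ENNReal.ofReal (|t - t₀| ^ (-1:ℝ)) = ∞ := by
        rw [hshift]
        exact aux_inv_div (by linarith [ht₀.2] : (0:ℝ) < β - t₀)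
      have : ∫⁻ t in Ioc α β, ENNReal.ofReal (|t - t₀| ^ (-1:ℝ)) = ∞ :=
        top_le_iff.mp (hdiv ▸ hsub)
      rw [this]
      rw [ENNReal.mul_top]
      simp only [ne_eq, ENNReal.ofReal_eq_zero, not_le]
      exact Real.rpow_pos_of_pos (hc n₀) p
    exact top_le_iff.mp (hlow ▸ hge)
  rw [hlin] at hfin
  rw [ENNReal.top_rpow_of_pos (by positivity)] at hfin
  exact absurd hfin (lt_irrefl _)

end Main


/-- **The scalar problem `x' + a x = 1`, `x(0)=0`, with
`a(t) = 1 + ∑ₙ cₙ |t-tₙ|^{-1/p}`, fails maximal `L_p`-regularity.** -/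
theorem scalar_counterexample_maximal_Lp_regularity_fails
    (p : ℝ) (hp : 1 < p)
    (ts : ℕ → ℝ) (hts : ∀ n, ts n ∈ Icc (0:ℝ) 1)
    (htsdense : Icc (0:ℝ) 1 ⊆ closure (Set.range ts))
    (c : ℕ → ℝ) (hc : ∀ n, 0 < c n) (hcsum : Summable c)
    (a : ℝ → ℝ) (ha : ∀ t, a t = 1 + ∑' n, c n * |t - ts n| ^ (-(1/p)))
    (x : ℝ → ℝ) (hx : ∀ t, x t = ∫ s in (0:ℝ)..t, Real.exp (-∫ r in s..t, a r)) :
    -- (i): `a ∈ L_q(0,1)` for every `1 ≤ q < p` …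
    (∀ q : ℝ, 1 ≤ q → q < p →
      MemLp a (ENNReal.ofReal q) (volume.restrict (Ioc (0:ℝ) 1))) ∧
    -- … but `a ∉ L_p(I)` for every nondegenerate subinterval `I ⊆ [0,1]`
    (∀ α β : ℝ, 0 ≤ α → α < β → β ≤ 1 →
      ¬ MemLp a (ENNReal.ofReal p) (volume.restrict (Ioc α β))) ∧
    -- (ii): `a(t) x(t) ≥ C t a(t)` on `[0,1]` with `C = exp(-∫₀¹ a) > 0`
    (∀ t ∈ Icc (0:ℝ) 1,
      Real.exp (-∫ r in (0:ℝ)..1, a r) * t * a t ≤ a t * x t) ∧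
    -- consequently `a·x ∉ L_p(α,β)` for any `0 < α < β ≤ 1` …
    (∀ α β : ℝ, 0 < α → α < β → β ≤ 1 →
      ¬ MemLp (fun t => a t * x t) (ENNReal.ofReal p) (volume.restrict (Ioc α β))) ∧
    -- … so the problem `x' + a x = f`, `x(0) = 0` fails maximal `L_p`-regularity
    ¬ (∀ f : ℝ → ℝ, MemLp f (ENNReal.ofReal p) (volume.restrict (Ioc (0:ℝ) 1)) →
        MemLp (fun t => a t * ∫ s in (0:ℝ)..t, f s * Real.exp (-∫ r in s..t, a r))
          (ENNReal.ofReal p) (volume.restrict (Ioc (0:ℝ) 1))) := by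
  have hage := aux_a_ge_one hp hc ha
  have hint : IntegrableOn a (Ioc (0:ℝ) 1) volume := by
    have h1 := aux_memLp hp hts hc hcsum ha le_rfl hp
    rw [ENNReal.ofReal_one] at h1
    exact memLp_one_iff_integrable.mp h1
  have hiii := aux_lower_bound hint hage hx
  have hiv : ∀ α β : ℝ, 0 < α → α < β → β ≤ 1 →
      ¬ MemLp (fun t => a t * x t) (ENNReal.ofReal p) (volume.restrict (Ioc α β)) := by
    intro α β hα hαβ hβ hmem
    set C := Real.exp (-∫ r in (0:ℝ)..1, a r) with hCdef
    have hCpos : 0 < C := Real.exp_pos _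
    have hCα : 0 < C * α := mul_pos hCpos hα
    set d : ℝ := (C * α)⁻¹ with hddef
    have hbound : ∀ t ∈ Ioc α β, ‖a t‖ ≤ ‖d * (a t * x t)‖ := by
      intro t htm
      have htI : t ∈ Icc (0:ℝ) 1 := ⟨le_of_lt (lt_of_le_of_lt hα.le htm.1), htm.2.trans hβ⟩
      have h1 := hiii t htI
      have h2 : C * α * a t ≤ C * t * a t := by
        apply mul_le_mul_of_nonneg_right _ (by linarith [hage t])
        exact mul_le_mul_of_nonneg_left htm.1.le hCpos.le
      have h3 : C * α * a t ≤ a t * x t := le_trans h2 h1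
      have h4 : a t ≤ d * (a t * x t) := by
        have := mul_le_mul_of_nonneg_left h3 (inv_nonneg.mpr hCα.le)
        rw [hddef]
        calc a t = (C * α)⁻¹ * (C * α * a t) := by
              rw [← mul_assoc, inv_mul_cancel₀ hCα.ne', one_mul]
          _ ≤ (C * α)⁻¹ * (a t * x t) := this
      rw [Real.norm_eq_abs, Real.norm_eq_abs, abs_of_nonneg (by linarith [hage t])]
      exact h4.trans (le_abs_self _)
    have hmema : MemLp a (ENNReal.ofReal p) (volume.restrict (Ioc α β)) := by
      refine MemLp.of_le (hmem.const_mul d)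
        (aux_a_meas hp hc ha).aestronglyMeasurable ?_
      rw [ae_restrict_iff' measurableSet_Ioc]
      exact Eventually.of_forall hbound
    exact aux_not_memLp hp hts htsdense hc hcsum ha hα.le hαβ hβ hmema
  refine ⟨fun q hq1 hqp => aux_memLp hp hts hc hcsum ha hq1 hqp,
    fun α β hα hαβ hβ => aux_not_memLp hp hts htsdense hc hcsum ha hα hαβ hβ,
    hiii, hiv, ?_⟩
  intro hall
  haveI : IsFiniteMeasure (volume.restrict (Ioc (0:ℝ) 1)) := by
    constructor
    rw [Measure.restrict_apply_univ, Real.volume_Ioc]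
    exact ENNReal.ofReal_lt_top
  have h1 : MemLp (fun _ : ℝ => (1:ℝ)) (ENNReal.ofReal p)
      (volume.restrict (Ioc (0:ℝ) 1)) := memLp_const 1
  have h2 := hall _ h1
  have heq : (fun t => a t * ∫ s in (0:ℝ)..t, (1:ℝ) * Real.exp (-∫ r in s..t, a r))
      = fun t => a t * x t := by
    funext t
    rw [hx t]
    simp only [one_mul]
  rw [heq] at h2
  have h3 : MemLp (fun t => a t * x t) (ENNReal.ofReal p)
      (volume.restrict (Ioc (1/2 : ℝ) 1)) :=
    h2.mono_measure (Measure.restrict_mono (Ioc_subset_Ioc (by norm_num) le_rfl) le_rfl)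
  exact hiv (1/2) 1 (by norm_num) (by norm_num) le_rfl h3
end
end

section
/- Let p ∈ (1,∞), let (t_n) be a dense sequence in [0,1] and (c_n) a summable sequence of positive reals, and define a(t) := 1 + Σ_n c_n |t − t_n|^{−1/p} for t ∈ [0,1]. Fix 1 ≤ q < p. Then for every f ∈ L_q(0,1), the solution x_f(t) = ∫₀ᵗ f(s) exp(−∫ₛᵗ a(r) dr) ds of x′(t) + a(t)x(t) = f(t), x(0) = 0, satisfies the pointwise bound |a(t)·x_f(t)| ≤ C·a(t)·‖f‖_{L_q(0,1)} for all t ∈ [0,1] and some constant C independent of f; since a ∈ L_q(0,1), it follows that a·x_f ∈ L_q(0,1), i.e. the problem x′ + a x = f, x(0) = 0 has maximal L_q-regularity. -/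
/- Maximal `L_q`-regularity, `q < p`, for the scalar example (Haak–Ouhabaz, Example 1.4):
with `a(t) = 1 + ∑ₙ cₙ |t - tₙ|^{-1/p}` as before and `1 ≤ q < p`, for every
`f ∈ L_q(0,1)` the solution `x_f(t) = ∫₀ᵗ f(s) exp(-∫ₛᵗ a) ds` of `x' + a x = f`,
`x(0) = 0`, satisfies the pointwise bound `|a(t) x_f(t)| ≤ C a(t) ‖f‖_{L_q(0,1)}` on
`[0,1]`, with `C` independent of `f`; since `a ∈ L_q(0,1)`, it follows that
`a·x_f ∈ L_q(0,1)`, i.e. the problem has maximal `L_q`-regularity. -/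

open MeasureTheory Set Filter
open scoped ENNReal Topology

noncomputable section

lemma aux_abs_rpow_II {r : ℝ} (hr : -1 < r) (a b : ℝ) :
    IntervalIntegrable (fun x => |x| ^ r) volume a b := by
  have H : ∀ c : ℝ, 0 ≤ c → IntervalIntegrable (fun x => |x| ^ r) volume 0 c := by
    intro c hc
    have h0 : IntervalIntegrable (fun x : ℝ => x ^ r) volume 0 c :=
      intervalIntegral.intervalIntegrable_rpow' hr
    rw [intervalIntegrable_iff, uIoc_of_le hc] at h0 ⊢
    exact h0.congr_fun (fun x hx => by rw [abs_of_pos hx.1]) measurableSet_Ioc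
  have H' : ∀ c : ℝ, IntervalIntegrable (fun x => |x| ^ r) volume 0 c := by
    intro c
    rcases le_total 0 c with hc | hc
    · exact H c hc
    · have h1 := H (-c) (by linarith)
      rw [IntervalIntegrable.iff_comp_neg] at h1
      simpa using h1
  exact (H' a).symm.trans (H' b)

lemma aux_kernel {r : ℝ} (hr0 : 0 < r) (hr1 : r < 1) {u : ℝ} (hu : u ∈ Icc (0:ℝ) 1) :
    IntegrableOn (fun t => |t - u| ^ (-r)) (Ioc (0:ℝ) 1) volume ∧
      ∫ t in Ioc (0:ℝ) 1, |t - u| ^ (-r) ≤ 2 / (1 - r) := by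
  have hrr : (-1 : ℝ) < -r := by linarith
  have hII : IntervalIntegrable (fun t => |t - u| ^ (-r)) volume (u - 1) (u + 1) := by
    have h := (aux_abs_rpow_II hrr (-1) 1).comp_sub_right u
    have e1 : (-1 : ℝ) + u = u - 1 := by ring
    have e2 : (1 : ℝ) + u = u + 1 := by ring
    rwa [e1, e2] at h
  have hle : u - 1 ≤ u + 1 := by linarith
  have hlarge : IntegrableOn (fun t => |t - u| ^ (-r)) (Ioc (u - 1) (u + 1)) volume := by
    rwa [intervalIntegrable_iff, uIoc_of_le hle] at hII
  have hsub : Ioc (0:ℝ) 1 ⊆ Ioc (u - 1) (u + 1) :=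
    Ioc_subset_Ioc (by linarith [hu.2]) (by linarith [hu.1])
  refine ⟨hlarge.mono_set hsub, ?_⟩
  have hnn : ∀ t : ℝ, 0 ≤ |t - u| ^ (-r) := fun t => Real.rpow_nonneg (abs_nonneg _) _
  have step1 : ∫ t in Ioc (0:ℝ) 1, |t - u| ^ (-r)
      ≤ ∫ t in Ioc (u - 1) (u + 1), |t - u| ^ (-r) :=
    setIntegral_mono_set hlarge (Filter.Eventually.of_forall fun t => hnn t)
      (HasSubset.Subset.eventuallyLE hsub)
  have step2 : ∫ t in Ioc (u - 1) (u + 1), |t - u| ^ (-r)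
      = ∫ t in (u - 1)..(u + 1), |t - u| ^ (-r) :=
    (intervalIntegral.integral_of_le hle).symm
  have step3 : ∫ t in (u - 1)..(u + 1), |t - u| ^ (-r) = ∫ x in (-1 : ℝ)..1, |x| ^ (-r) := by
    have h := intervalIntegral.integral_comp_sub_right (a := u - 1) (b := u + 1)
      (fun x => |x| ^ (-r)) u
    have e1 : u - 1 - u = (-1 : ℝ) := by ring
    have e2 : u + 1 - u = (1 : ℝ) := by ring
    rw [e1, e2] at h
    exact h
  have hI01 : ∫ x in (0:ℝ)..1, |x| ^ (-r) = 1 / (1 - r) := by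
    have hcongr : ∫ x in (0:ℝ)..1, |x| ^ (-r) = ∫ x in (0:ℝ)..1, x ^ (-r) := by
      refine intervalIntegral.integral_congr fun x hx => ?_
      rw [uIcc_of_le (by norm_num : (0:ℝ) ≤ 1)] at hx
      rw [abs_of_nonneg hx.1]
    rw [hcongr, integral_rpow (Or.inl hrr)]
    rw [Real.one_rpow, Real.zero_rpow (by linarith : -r + 1 ≠ 0)]
    rw [show -r + 1 = 1 - r by ring]
    norm_num
  have hIneg : ∫ x in (-1 : ℝ)..0, |x| ^ (-r) = ∫ x in (0:ℝ)..1, |x| ^ (-r) := by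
    have h := intervalIntegral.integral_comp_neg (a := (-1:ℝ)) (b := 0) (fun x => |x| ^ (-r))
    simp only [abs_neg] at h
    rw [h]
    norm_num
  have step4 : ∫ x in (-1 : ℝ)..1, |x| ^ (-r) = 2 / (1 - r) := by
    have hadd := intervalIntegral.integral_add_adjacent_intervals
      (aux_abs_rpow_II hrr (-1) 0) (aux_abs_rpow_II hrr 0 1)
    rw [← hadd, hIneg, hI01]
    ring
  calc ∫ t in Ioc (0:ℝ) 1, |t - u| ^ (-r)
      ≤ ∫ t in Ioc (u - 1) (u + 1), |t - u| ^ (-r) := step1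
    _ = 2 / (1 - r) := by rw [step2, step3, step4]

lemma aux_kernel_lintegral {r : ℝ} (hr0 : 0 < r) (hr1 : r < 1) {u : ℝ} (hu : u ∈ Icc (0:ℝ) 1) :
    ∫⁻ t in Ioc (0:ℝ) 1, ENNReal.ofReal (|t - u| ^ (-r)) ≤ ENNReal.ofReal (2 / (1 - r)) := by
  obtain ⟨hint, hval⟩ := aux_kernel hr0 hr1 hu
  rw [← ofReal_integral_eq_lintegral_ofReal hint
    (Filter.Eventually.of_forall fun t => Real.rpow_nonneg (abs_nonneg _) _)]
  exact ENNReal.ofReal_le_ofReal hval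

lemma aux_kernel_eLpNorm {p q : ℝ} (hp : 1 < p) (hq1 : 1 ≤ q) (hqp : q < p)
    {u : ℝ} (hu : u ∈ Icc (0:ℝ) 1) :
    eLpNorm (fun t => |t - u| ^ (-(1/p))) (ENNReal.ofReal q) (volume.restrict (Ioc (0:ℝ) 1))
      ≤ ENNReal.ofReal ((2 / (1 - q / p)) ^ (1/q)) := by
  have hq0 : 0 < q := lt_of_lt_of_le one_pos hq1
  have hp0 : 0 < p := by linarith
  have hr0 : 0 < q / p := div_pos hq0 hp0
  have hr1 : q / p < 1 := (div_lt_one hp0).mpr hqp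
  have h2r : 0 ≤ 2 / (1 - q / p) := div_nonneg (by norm_num) (by linarith)
  have hQ0 : ENNReal.ofReal q ≠ 0 := by
    simp [ENNReal.ofReal_eq_zero]; linarith
  rw [eLpNorm_eq_lintegral_rpow_enorm_toReal hQ0 ENNReal.ofReal_ne_top,
    ENNReal.toReal_ofReal hq0.le]
  have key : ∀ t : ℝ, ‖|t - u| ^ (-(1/p))‖ₑ ^ q
      = ENNReal.ofReal (|t - u| ^ (-(q/p))) := by
    intro t
    rw [Real.enorm_eq_ofReal (Real.rpow_nonneg (abs_nonneg _) _),
      ENNReal.ofReal_rpow_of_nonneg (Real.rpow_nonneg (abs_nonneg _) _) hq0.le,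
      ← Real.rpow_mul (abs_nonneg _)]
    norm_num
    rw [show p⁻¹ * q = q / p by ring]
  simp_rw [key]
  refine le_trans (ENNReal.rpow_le_rpow (aux_kernel_lintegral hr0 hr1 hu)
    (by positivity : 0 ≤ 1/q)) ?_
  rw [ENNReal.ofReal_rpow_of_nonneg h2r (by positivity)]

lemma aux_memLp_a {p q : ℝ} (hp : 1 < p) (hq1 : 1 ≤ q) (hqp : q < p)
    (ts : ℕ → ℝ) (hts : ∀ n, ts n ∈ Icc (0:ℝ) 1)
    (c : ℕ → ℝ) (hc : ∀ n, 0 < c n) (hcsum : Summable c)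
    (a : ℝ → ℝ) (ha : ∀ t, a t = 1 + ∑' n, c n * |t - ts n| ^ (-(1/p))) :
    MemLp a (ENNReal.ofReal q) (volume.restrict (Ioc (0:ℝ) 1)) := by
  set μ := volume.restrict (Ioc (0:ℝ) 1) with hμ
  have hp0 : 0 < p := by linarith
  have hq0 : 0 < q := by linarith
  set g : ℕ → ℝ → ℝ := fun n t => c n * |t - ts n| ^ (-(1/p)) with hg
  have hg_meas : ∀ n, Measurable (g n) := by
    intro n
    exact measurable_const.mul ((measurable_id.sub_const (ts n)).abs.pow_const _)
  have hg_nonneg : ∀ n t, 0 ≤ g n t :=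
    fun n t => mul_nonneg (hc n).le (Real.rpow_nonneg (abs_nonneg _) _)
  set h : ℕ → ℝ → ℝ≥0∞ := fun n t => ENNReal.ofReal (g n t) with hh
  set G : ℝ → ℝ≥0∞ := fun t => ∑' n, h n t with hG
  have hh_meas : ∀ n, Measurable (h n) := fun n => (hg_meas n).ennreal_ofReal
  have hG_meas : Measurable G := Measurable.ennreal_tsum hh_meas
  -- each h n has finite integral, uniformly summable
  have hrp0 : 0 < 1/p := by positivity
  have hrp1 : 1/p < 1 := by rw [div_lt_one hp0]; linarith
  have hGfin : ∀ᵐ t ∂μ, G t < ∞ := by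
    refine ae_lt_top hG_meas ?_
    rw [lintegral_tsum fun n => (hh_meas n).aemeasurable]
    have hterm : ∀ n, ∫⁻ t, h n t ∂μ
        ≤ ENNReal.ofReal (c n) * ENNReal.ofReal (2 / (1 - 1/p)) := by
      intro n
      have : ∀ t, h n t = ENNReal.ofReal (c n) * ENNReal.ofReal (|t - ts n| ^ (-(1/p))) := by
        intro t
        rw [hh]
        simp only [hg]
        rw [ENNReal.ofReal_mul (hc n).le]
      simp_rw [this]
      rw [lintegral_const_mul' _ _ ENNReal.ofReal_ne_top]
      exact mul_le_mul_right (aux_kernel_lintegral hrp0 hrp1 (hts n)) _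
    refine ne_top_of_le_ne_top ?_ (ENNReal.tsum_le_tsum hterm)
    rw [ENNReal.tsum_mul_right, ← ENNReal.ofReal_tsum_of_nonneg (fun n => (hc n).le) hcsum]
    exact ENNReal.mul_ne_top ENNReal.ofReal_ne_top ENNReal.ofReal_ne_top
  have htsumeq : ∀ t : ℝ, G t < ∞ → ∑' n, g n t = (G t).toReal := by
    intro t ht
    rw [hG, ENNReal.tsum_toReal_eq fun n => ENNReal.ofReal_ne_top]
    exact tsum_congr fun n => (ENNReal.toReal_ofReal (hg_nonneg n t)).symm
  have haeq : a =ᵐ[μ] fun t => 1 + (G t).toReal := by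
    filter_upwards [hGfin] with t ht
    rw [ha t, htsumeq t ht]
  refine MemLp.ae_eq haeq.symm ?_
  refine MemLp.add (memLp_const 1) ?_
  constructor
  · exact (ENNReal.measurable_toReal.comp hG_meas).aestronglyMeasurable
  · -- eLpNorm bound via Fatou
    set Q := ENNReal.ofReal q with hQ
    have hQ1 : 1 ≤ Q := ENNReal.one_le_ofReal.mpr hq1
    set K := ENNReal.ofReal ((2 / (1 - q / p)) ^ (1/q)) with hK
    set S : ℕ → ℝ → ℝ := fun N t => ∑ n ∈ Finset.range N, g n t with hS
    have hS_meas : ∀ N, AEStronglyMeasurable (S N) μ := by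
      intro N
      exact (Finset.measurable_sum _ fun n _ => hg_meas n).aestronglyMeasurable
    have hlim : ∀ᵐ t ∂μ, Tendsto (fun N => S N t) atTop (𝓝 ((G t).toReal)) := by
      filter_upwards [hGfin] with t ht
      have hsumm : Summable fun n => g n t := by
        have h1 := ENNReal.summable_toReal ht.ne
        exact h1.congr fun n => ENNReal.toReal_ofReal (hg_nonneg n t)
      have := hsumm.hasSum.tendsto_sum_nat
      rwa [htsumeq t ht] at this
    have hSbound : ∀ N, eLpNorm (S N) Q μ ≤ ENNReal.ofReal (∑' n, c n) * K := by
      intro N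
      have hfun : S N = ∑ n ∈ Finset.range N, g n := by
        funext t
        simp [hS]
      rw [hfun]
      refine le_trans (eLpNorm_sum_le (fun n _ => (hg_meas n).aestronglyMeasurable) hQ1) ?_
      have hterm : ∀ n, eLpNorm (g n) Q μ ≤ ENNReal.ofReal (c n) * K := by
        intro n
        have hsmul : g n = (c n) • fun t => |t - ts n| ^ (-(1/p)) := by
          funext t; simp [hg]
        rw [hsmul, eLpNorm_const_smul]
        have : ‖c n‖ₑ = ENNReal.ofReal (c n) :=
          Real.enorm_eq_ofReal (hc n).le
        rw [this]
        exact mul_le_mul_right (aux_kernel_eLpNorm hp hq1 hqp (hts n)) _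
      calc ∑ n ∈ Finset.range N, eLpNorm (g n) Q μ
          ≤ ∑ n ∈ Finset.range N, ENNReal.ofReal (c n) * K :=
            Finset.sum_le_sum fun n _ => hterm n
        _ = (∑ n ∈ Finset.range N, ENNReal.ofReal (c n)) * K := by rw [Finset.sum_mul]
        _ ≤ ENNReal.ofReal (∑' n, c n) * K := by
            refine mul_le_mul_left ?_ K
            rw [← ENNReal.ofReal_sum_of_nonneg fun n _ => (hc n).le]
            exact ENNReal.ofReal_le_ofReal (Summable.sum_le_tsum _ (fun n _ => (hc n).le) hcsum)
    calc eLpNorm (fun t => (G t).toReal) Q μ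
        ≤ atTop.liminf fun N => eLpNorm (S N) Q μ :=
          Lp.eLpNorm_lim_le_liminf_eLpNorm hS_meas _ hlim
      _ ≤ ENNReal.ofReal (∑' n, c n) * K := by
          refine liminf_le_of_frequently_le ?_
          exact Frequently.of_forall fun N => hSbound N
      _ < ∞ := ENNReal.mul_lt_top ENNReal.ofReal_lt_top ENNReal.ofReal_lt_top

/-- **Maximal `L_q`-regularity, `1 ≤ q < p`, of `x' + a x = f`, `x(0) = 0`.** -/
theorem scalar_example_maximal_Lq_regularity
    (p : ℝ) (hp : 1 < p)
    (ts : ℕ → ℝ) (hts : ∀ n, ts n ∈ Icc (0:ℝ) 1)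
    (htsdense : Icc (0:ℝ) 1 ⊆ closure (Set.range ts))
    (c : ℕ → ℝ) (hc : ∀ n, 0 < c n) (hcsum : Summable c)
    (a : ℝ → ℝ) (ha : ∀ t, a t = 1 + ∑' n, c n * |t - ts n| ^ (-(1/p)))
    (q : ℝ) (hq1 : 1 ≤ q) (hqp : q < p) :
    ∃ C : ℝ, 0 < C ∧
      ∀ f : ℝ → ℝ, MemLp f (ENNReal.ofReal q) (volume.restrict (Ioc (0:ℝ) 1)) →
        -- pointwise bound `|a(t) x_f(t)| ≤ C a(t) ‖f‖_{L_q(0,1)}` on `[0,1]` …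
        (∀ t ∈ Icc (0:ℝ) 1,
          |a t * ∫ s in (0:ℝ)..t, f s * Real.exp (-∫ r in s..t, a r)|
            ≤ C * a t *
              (eLpNorm f (ENNReal.ofReal q) (volume.restrict (Ioc (0:ℝ) 1))).toReal) ∧
        -- … hence `a · x_f ∈ L_q(0,1)`: maximal `L_q`-regularity
        MemLp (fun t => a t * ∫ s in (0:ℝ)..t, f s * Real.exp (-∫ r in s..t, a r))
          (ENNReal.ofReal q) (volume.restrict (Ioc (0:ℝ) 1)) := by
  have hp0 : 0 < p := by linarith
  set μ := volume.restrict (Ioc (0:ℝ) 1) with hμ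
  set Q := ENNReal.ofReal q with hQdef
  have hQ1 : 1 ≤ Q := ENNReal.one_le_ofReal.mpr hq1
  haveI : IsProbabilityMeasure μ := by
    constructor
    rw [hμ, Measure.restrict_apply_univ, Real.volume_Ioc]
    norm_num
  have hae : ∀ (P : ℝ → Prop), (∀ t ∈ Ioc (0:ℝ) 1, P t) → ∀ᵐ t ∂μ, P t := by
    intro P h
    rw [hμ]
    exact (ae_restrict_iff' measurableSet_Ioc).mpr (Filter.Eventually.of_forall h)
  have ha_one : ∀ t, 1 ≤ a t := by
    intro t
    rw [ha t]
    have h0 : 0 ≤ ∑' n, c n * |t - ts n| ^ (-(1/p)) :=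
      tsum_nonneg fun n => mul_nonneg (hc n).le (Real.rpow_nonneg (abs_nonneg _) _)
    linarith
  have ha_nonneg : ∀ t, 0 ≤ a t := fun t => le_trans zero_le_one (ha_one t)
  have hmem_a : MemLp a Q μ := aux_memLp_a hp hq1 hqp ts hts c hc hcsum a ha
  have hint_a : IntegrableOn a (Icc (0:ℝ) 1) volume := by
    rw [integrableOn_Icc_iff_integrableOn_Ioc]
    exact memLp_one_iff_integrable.mp (hmem_a.mono_exponent hQ1)
  have h01 : (0:ℝ) ∈ Icc (0:ℝ) 1 := by norm_num
  have h11 : (1:ℝ) ∈ Icc (0:ℝ) 1 := by norm_num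
  have hII : ∀ s t : ℝ, s ∈ Icc (0:ℝ) 1 → t ∈ Icc (0:ℝ) 1 →
      IntervalIntegrable a volume s t := by
    intro s t hs ht
    refine (hint_a.mono_set ?_).intervalIntegrable
    rw [uIcc]
    exact Icc_subset_Icc (le_min hs.1 ht.1) (max_le hs.2 ht.2)
  set A : ℝ → ℝ := fun t => ∫ r in (0:ℝ)..t, a r with hA
  have hA_cont : ContinuousOn A (Icc (0:ℝ) 1) := by
    have h := intervalIntegral.continuousOn_primitive_interval (a := (0:ℝ)) (b := 1) (f := a) (μ := volume)
      (by rw [uIcc_of_le (by norm_num : (0:ℝ) ≤ 1)]; exact hint_a)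
    rwa [uIcc_of_le (by norm_num : (0:ℝ) ≤ 1)] at h
  have hA_sub : ∀ s t : ℝ, s ∈ Icc (0:ℝ) 1 → t ∈ Icc (0:ℝ) 1 →
      A t - A s = ∫ r in s..t, a r := by
    intro s t hs ht
    exact intervalIntegral.integral_interval_sub_left (hII 0 t h01 ht) (hII 0 s h01 hs)
  refine ⟨1, one_pos, ?_⟩
  intro f hf
  have hf1 : MemLp f 1 μ := hf.mono_exponent hQ1
  have hfint : IntegrableOn f (Ioc (0:ℝ) 1) volume := by
    have := memLp_one_iff_integrable.mp hf1
    rwa [hμ] at this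
  set Nq := (eLpNorm f Q μ).toReal with hNq
  have hNq_nonneg : 0 ≤ Nq := ENNReal.toReal_nonneg
  have hL1 : ∫ s in Ioc (0:ℝ) 1, |f s| ≤ Nq := by
    have h1 : ∫ s in Ioc (0:ℝ) 1, |f s| = (eLpNorm f 1 μ).toReal := by
      rw [eLpNorm_one_eq_lintegral_enorm, ← integral_norm_eq_lintegral_enorm hf1.1]
      rw [hμ]
      simp [Real.norm_eq_abs]
    rw [h1]
    exact ENNReal.toReal_mono hf.2.ne (eLpNorm_le_eLpNorm_of_exponent_le hQ1 hf.1)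
  have hpoint : ∀ t ∈ Icc (0:ℝ) 1,
      |∫ s in (0:ℝ)..t, f s * Real.exp (-∫ r in s..t, a r)| ≤ Nq := by
    intro t ht
    have ht0 : (0:ℝ) ≤ t := ht.1
    calc |∫ s in (0:ℝ)..t, f s * Real.exp (-∫ r in s..t, a r)|
        ≤ ∫ s in (0:ℝ)..t, |f s * Real.exp (-∫ r in s..t, a r)| :=
          intervalIntegral.abs_integral_le_integral_abs ht0
      _ ≤ ∫ s in Ioc (0:ℝ) t, |f s| := by
          rw [intervalIntegral.integral_of_le ht0]
          refine integral_mono_of_nonneg (Filter.Eventually.of_forall fun s => abs_nonneg _)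
            (hfint.mono_set (Ioc_subset_Ioc le_rfl ht.2)).abs ?_
          refine (ae_restrict_iff' measurableSet_Ioc).mpr
            (Filter.Eventually.of_forall fun s hs => ?_)
          simp only []
          have hexp : Real.exp (-∫ r in s..t, a r) ≤ 1 := by
            have hnn : 0 ≤ ∫ r in s..t, a r :=
              intervalIntegral.integral_nonneg hs.2 fun u _ => ha_nonneg u
            exact Real.exp_le_one_iff.mpr (by linarith)
          rw [abs_mul, Real.abs_exp]
          calc |f s| * Real.exp (-∫ r in s..t, a r) ≤ |f s| * 1 :=
                mul_le_mul_of_nonneg_left hexp (abs_nonneg _)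
            _ = |f s| := mul_one _
      _ ≤ ∫ s in Ioc (0:ℝ) 1, |f s| :=
          setIntegral_mono_set hfint.abs
            (Filter.Eventually.of_forall fun s => abs_nonneg _)
            (HasSubset.Subset.eventuallyLE (Ioc_subset_Ioc le_rfl ht.2))
      _ ≤ Nq := hL1
  constructor
  · intro t ht
    rw [abs_mul, abs_of_nonneg (ha_nonneg t), one_mul]
    exact mul_le_mul_of_nonneg_left (hpoint t ht) (ha_nonneg t)
  · -- MemLp part
    set g2 : ℝ → ℝ := fun s => f s * Real.exp (A s) with hg2
    have hexpA_bdd : ∀ s ∈ Icc (0:ℝ) 1, Real.exp (A s) ≤ Real.exp (A 1) := by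
      intro s hs
      have h1 : A 1 - A s = ∫ r in s..1, a r := hA_sub s 1 hs h11
      have hnn : 0 ≤ ∫ r in s..1, a r :=
        intervalIntegral.integral_nonneg hs.2 fun u _ => ha_nonneg u
      exact Real.exp_le_exp.mpr (by linarith)
    have hg2int : IntegrableOn g2 (Icc (0:ℝ) 1) volume := by
      have hfIcc : IntegrableOn f (Icc (0:ℝ) 1) volume :=
        Iff.mpr integrableOn_Icc_iff_integrableOn_Ioc hfint
      have hb := Integrable.bdd_mul (c := Real.exp (A 1)) hfIcc
        ((Real.continuous_exp.comp_continuousOn hA_cont).aestronglyMeasurable measurableSet_Icc)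
        ((ae_restrict_iff' measurableSet_Icc).mpr (Filter.Eventually.of_forall fun s hs => by
          show ‖Real.exp (A s)‖ ≤ Real.exp (A 1)
          rw [Real.norm_eq_abs, Real.abs_exp]
          exact hexpA_bdd s hs))
      exact hb.congr (Filter.Eventually.of_forall fun s => mul_comm _ _)
    set P : ℝ → ℝ := fun t => ∫ s in (0:ℝ)..t, g2 s with hP
    have hP_cont : ContinuousOn P (Icc (0:ℝ) 1) := by
      have h := intervalIntegral.continuousOn_primitive_interval (a := (0:ℝ)) (b := 1) (f := g2) (μ := volume)
        (by rw [uIcc_of_le (by norm_num : (0:ℝ) ≤ 1)]; exact hg2int)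
      rwa [uIcc_of_le (by norm_num : (0:ℝ) ≤ 1)] at h
    set F : ℝ → ℝ := fun t => Real.exp (-A t) * P t with hF
    have hF_cont : ContinuousOn F (Icc (0:ℝ) 1) :=
      (Real.continuous_exp.comp_continuousOn hA_cont.neg).mul hP_cont
    have hXF : ∀ t ∈ Icc (0:ℝ) 1,
        (∫ s in (0:ℝ)..t, f s * Real.exp (-∫ r in s..t, a r)) = F t := by
      intro t ht
      have hintegrand : EqOn (fun s => f s * Real.exp (-∫ r in s..t, a r))
          (fun s => Real.exp (-A t) * g2 s) (uIcc 0 t) := by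
        intro s hs
        rw [uIcc_of_le ht.1] at hs
        have hs01 : s ∈ Icc (0:ℝ) 1 := ⟨hs.1, le_trans hs.2 ht.2⟩
        have h1 : (∫ r in s..t, a r) = A t - A s := (hA_sub s t hs01 ht).symm
        simp only [hg2]
        rw [h1, show -(A t - A s) = A s + -A t by ring, Real.exp_add]
        ring
      rw [intervalIntegral.integral_congr hintegrand, intervalIntegral.integral_const_mul]
    have hXaesm : AEStronglyMeasurable
        (fun t => ∫ s in (0:ℝ)..t, f s * Real.exp (-∫ r in s..t, a r)) μ := by
      have hFaesm : AEStronglyMeasurable F μ := by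
        rw [hμ]
        exact (hF_cont.mono Ioc_subset_Icc_self).aestronglyMeasurable measurableSet_Ioc
      refine hFaesm.congr ?_
      exact hae _ fun t htt => (hXF t (Ioc_subset_Icc_self htt)).symm
    have hAESM : AEStronglyMeasurable
        (fun t => a t * ∫ s in (0:ℝ)..t, f s * Real.exp (-∫ r in s..t, a r)) μ :=
      hmem_a.1.mul hXaesm
    refine MemLp.of_le_mul (c := Nq) hmem_a hAESM ?_
    refine hae _ fun t htt => ?_
    have ht : t ∈ Icc (0:ℝ) 1 := Ioc_subset_Icc_self htt
    rw [Real.norm_eq_abs, Real.norm_eq_abs, abs_mul, abs_of_nonneg (ha_nonneg t)]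
    calc a t * |∫ s in (0:ℝ)..t, f s * Real.exp (-∫ r in s..t, a r)|
        ≤ a t * Nq := mul_le_mul_of_nonneg_left (hpoint t ht) (ha_nonneg t)
      _ = Nq * a t := by ring
end
end
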